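/- Let A, B, C, P be points in the plane with A, B, C not collinear. Let f be the direct similarity (rotation composed with dilation) centered at A that maps C to B, and let P' = f(P). Then dist(P, P') = (dist(B,C)/dist(A,C)) · dist(A,P), dist(P', B) = (dist(A,B)/dist(A,C)) · dist(P, C), and dist(P, B) = dist(P,B), so the side lengths of triangle P B P' are proportional to (a·dist(P,A), b·dist(P,B), c·dist(P,C)) where a = dist(B,C), b = dist(C,A), c = dist(A,B). -/

import Mathlib

/-- Akopyan's spiral-similarity construction: let `f` be the direct similarity
centered at `A` mapping `C` to `B`, and `P' = f P`. Then the triangle `P B P'`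
has side lengths proportional to `(a·PA, b·PB, c·PC)`. -/
theorem stmt_10 (A B C P : ℂ)
    (hABC : ¬ Collinear ℝ ({A, B, C} : Set ℂ))
    (P' : ℂ) (hP' : P' = A + ((B - A) / (C - A)) * (P - A)) :
    dist P P' = (dist B C / dist A C) * dist A P ∧
      dist P' B = (dist A B / dist A C) * dist P C := by
  have hAC : C ≠ A := by
    intro hc
    apply hABC
    rw [hc]
    have hsub : ({A, B, A} : Set ℂ) ⊆ {A, B} := by intro x hx; simp at hx ⊢; tauto
    exact (collinear_pair ℝ A B).subset hsub
  have h : C - A ≠ 0 := sub_ne_zero.mpr hAC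
  have h1 : P - P' = (P - A) * (C - B) / (C - A) := by
    rw [hP']; field_simp; ring
  have h2 : P' - B = (B - A) * (P - C) / (C - A) := by
    rw [hP']; field_simp; ring
  constructor
  · rw [Complex.dist_eq, Complex.dist_eq, Complex.dist_eq, Complex.dist_eq, h1, norm_div, norm_mul,
      norm_sub_rev C B, norm_sub_rev C A, norm_sub_rev P A]
    ring
  · rw [Complex.dist_eq, Complex.dist_eq, Complex.dist_eq, Complex.dist_eq, h2, norm_div, norm_mul,
      norm_sub_rev B A, norm_sub_rev C A]
    ring
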